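/- Matrix Perturbation Lemma, angle estimate: For every κ ∈ (0, 5] there exists b₀ ∈ (0, κ) such that for every b ∈ (0, b₀) there exists λ with b < λ < min(1, κ) with the following property. Let n ≥ 1, let v ∈ ℝ² be a unit vector, and let A₁, …, Aₙ and A₁′, …, Aₙ′ be 2×2 real matrices with det Aᵢ = b, det Aᵢ′ = b, ‖Aᵢ‖ ≤ 5 and ‖Aᵢ′‖ ≤ 5 for all 1 ≤ i ≤ n. If ‖Aⁱ v‖ ≥ κⁱ and ‖Aᵢ − Aᵢ′‖ < λⁱ for all 1 ≤ i ≤ n, then for all 1 ≤ i ≤ n the vectors Aⁱ v and A′ⁱ v are nonzero and the angle between Aⁱ v and A′ⁱ v is at most λ^{i/4}. -/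

import Mathlib

noncomputable section

/-- The Euclidean plane. -/
abbrev E2 := EuclideanSpace ℝ (Fin 2)

/-- Given a sequence of linear maps `A₁, A₂, …` on the plane, `matProd A i = Aᵢ ⋯ A₂ A₁`
(with `matProd A 0 = id`). -/
def matProd (A : ℕ → (E2 →L[ℝ] E2)) : ℕ → (E2 →L[ℝ] E2)
  | 0 => ContinuousLinearMap.id ℝ E2
  | (i + 1) => (A (i + 1)).comp (matProd A i)

namespace MPA

open Real

def omega2 (x y : E2) : ℝ := x 0 * y 1 - x 1 * y 0

lemma inner_eq (x y : E2) : (inner ℝ x y : ℝ) = x 0 * y 0 + x 1 * y 1 := by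
  simp [PiLp.inner_apply, Fin.sum_univ_two, RCLike.inner_apply, mul_comm]

lemma norm_sq_eq (x : E2) : ‖x‖ ^ 2 = x 0 ^ 2 + x 1 ^ 2 := by
  rw [← real_inner_self_eq_norm_sq, inner_eq]; ring

lemma lagrange (x y : E2) :
    omega2 x y ^ 2 + (inner ℝ x y : ℝ) ^ 2 = ‖x‖ ^ 2 * ‖y‖ ^ 2 := by
  rw [inner_eq, norm_sq_eq, norm_sq_eq, omega2]; ring

lemma abs_omega2_le (x y : E2) : |omega2 x y| ≤ ‖x‖ * ‖y‖ := by
  have h := lagrange x y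
  have h2 : omega2 x y ^ 2 ≤ (‖x‖ * ‖y‖) ^ 2 := by nlinarith [sq_nonneg ((inner ℝ x y : ℝ))]
  calc |omega2 x y| = √(omega2 x y ^ 2) := (Real.sqrt_sq_eq_abs _).symm
    _ ≤ √((‖x‖ * ‖y‖) ^ 2) := Real.sqrt_le_sqrt h2
    _ = ‖x‖ * ‖y‖ := Real.sqrt_sq (by positivity)

lemma apply_eq (f : E2 →L[ℝ] E2) (x : E2) (i : Fin 2) :
    f x i = x 0 * f (EuclideanSpace.single 0 1) i + x 1 * f (EuclideanSpace.single 1 1) i := by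
  have hx : x = x 0 • EuclideanSpace.single (0:Fin 2) (1:ℝ) + x 1 • EuclideanSpace.single 1 1 := by
    ext j; fin_cases j <;> simp [EuclideanSpace.single_apply]
  conv_lhs => rw [hx]
  simp [map_add, map_smul]

lemma det_eq (f : E2 →L[ℝ] E2) :
    LinearMap.det (f : E2 →ₗ[ℝ] E2) =
      f (EuclideanSpace.single 0 1) 0 * f (EuclideanSpace.single 1 1) 1 -
      f (EuclideanSpace.single 0 1) 1 * f (EuclideanSpace.single 1 1) 0 := by
  classical
  set B := (EuclideanSpace.basisFun (Fin 2) ℝ).toBasis with hB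
  rw [← LinearMap.det_toMatrix B, Matrix.det_fin_two]
  have h : ∀ i j : Fin 2, LinearMap.toMatrix B B (f : E2 →ₗ[ℝ] E2) i j
      = f (EuclideanSpace.single j 1) i := by
    intro i j; rw [LinearMap.toMatrix_apply]; simp [hB]
  rw [h, h, h, h]; ring

lemma omega2_map (f : E2 →L[ℝ] E2) (x y : E2) :
    omega2 (f x) (f y) = LinearMap.det (f : E2 →ₗ[ℝ] E2) * omega2 x y := by
  rw [det_eq, omega2, omega2, apply_eq f x, apply_eq f x, apply_eq f y, apply_eq f y]
  ring

lemma omega2_add_right (x y z : E2) : omega2 x (y + z) = omega2 x y + omega2 x z := by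
  simp [omega2]; ring

lemma omega2_smul_add (x y : E2) (a : ℝ) : omega2 x (a • x + y) = omega2 x y := by
  simp [omega2]; ring

lemma decomp (u u' : E2) (hu : ‖u‖ ≠ 0) :
    ∃ c : ℝ, ∃ p : E2, u' = c • u + p ∧ c * ‖u‖ ^ 2 = (inner ℝ u u' : ℝ) ∧
      ‖p‖ * ‖u‖ = |omega2 u u'| := by
  have hu2 : (‖u‖ : ℝ) ^ 2 ≠ 0 := pow_ne_zero _ hu
  set c : ℝ := (inner ℝ u u' : ℝ) / ‖u‖ ^ 2 with hc
  set p : E2 := u' - c • u with hp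
  have hdec : u' = c • u + p := by rw [hp]; abel
  have hcu : c * ‖u‖ ^ 2 = (inner ℝ u u' : ℝ) := by
    rw [hc]; field_simp
  have hip : (inner ℝ u p : ℝ) = 0 := by
    rw [hp, inner_sub_right, real_inner_smul_right, real_inner_self_eq_norm_sq]
    rw [← hcu]; ring
  refine ⟨c, p, hdec, hcu, ?_⟩
  have homega : omega2 u u' = omega2 u p := by
    conv_lhs => rw [hdec]
    exact omega2_smul_add u p c
  have hl := lagrange u p
  rw [hip] at hl
  rw [homega]
  have h2 : (‖p‖ * ‖u‖) ^ 2 = omega2 u p ^ 2 := by nlinarith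
  calc ‖p‖ * ‖u‖ = √((‖p‖ * ‖u‖) ^ 2) := (Real.sqrt_sq (by positivity)).symm
    _ = √(omega2 u p ^ 2) := by rw [h2]
    _ = |omega2 u p| := Real.sqrt_sq_eq_abs _

lemma arccos_anti {x y : ℝ} (h : x ≤ y) : Real.arccos y ≤ Real.arccos x := by
  rw [Real.arccos_eq_pi_div_two_sub_arcsin, Real.arccos_eq_pi_div_two_sub_arcsin]
  have := Real.monotone_arcsin h
  linarith

lemma cos_le_aux {a : ℝ} (h0 : 0 ≤ a) (h1 : a ≤ 1) : Real.cos a ≤ 1 - a ^ 2 / 9 := by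
  have hpi : a ≤ π := le_trans h1 (by linarith [Real.pi_gt_three])
  have h := Real.cos_le_one_sub_mul_cos_sq (x := a) (by rw [abs_of_nonneg h0]; exact hpi)
  have hπ4 : π ≤ 4 := Real.pi_le_four
  have hπ0 : 0 < π := Real.pi_pos
  have h9 : 1 / 9 ≤ 2 / π ^ 2 := by
    rw [div_le_div_iff₀ (by norm_num) (by positivity)]
    nlinarith
  nlinarith [sq_nonneg a]


end MPA

open MPA Real in
set_option maxHeartbeats 2000000 in
theorem matrix_perturbation_angle :
    ∀ κ : ℝ, 0 < κ → κ ≤ 5 →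
    ∃ b₀ : ℝ, 0 < b₀ ∧ b₀ < κ ∧
    ∀ b : ℝ, 0 < b → b < b₀ →
    ∃ lam : ℝ, b < lam ∧ lam < min 1 κ ∧
    ∀ n : ℕ, 1 ≤ n → ∀ v : E2, ‖v‖ = 1 →
    ∀ A A' : ℕ → (E2 →L[ℝ] E2),
    (∀ i : ℕ, 1 ≤ i → i ≤ n →
      LinearMap.det (A i : E2 →ₗ[ℝ] E2) = b ∧ LinearMap.det (A' i : E2 →ₗ[ℝ] E2) = b ∧
      ‖A i‖ ≤ 5 ∧ ‖A' i‖ ≤ 5) →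
    (∀ i : ℕ, 1 ≤ i → i ≤ n → κ ^ i ≤ ‖matProd A i v‖ ∧ ‖A i - A' i‖ < lam ^ i) →
    ∀ i : ℕ, 1 ≤ i → i ≤ n →
      matProd A i v ≠ 0 ∧ matProd A' i v ≠ 0 ∧
      InnerProductGeometry.angle (matProd A i v) (matProd A' i v) ≤ lam ^ ((i : ℝ) / 4) := by
  intro κ hκ0 hκ5
  set μ : ℝ := (κ / 60) ^ 10 with hμdef
  set lam : ℝ := μ ^ 4 with hlamdef
  have hμ0 : 0 < μ := by positivity
  have hlam0 : 0 < lam := by positivity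
  have hlam_eq : lam = (κ / 60) ^ 40 := by rw [hlamdef, hμdef, ← pow_mul]
  -- the master condition machine
  have cond : ∀ (C x : ℝ) (N j : ℕ), 0 ≤ C → x = (κ / 60) ^ N → j ≤ N →
      C * 5 ^ (N - j) ≤ 60 ^ N → C * x ≤ κ ^ j := by
    intro C x N j hC hx hj hC5
    have h60 : (0:ℝ) < 60 ^ N := by positivity
    have h1 : κ ^ (N - j) ≤ 5 ^ (N - j) := pow_le_pow_left₀ hκ0.le hκ5 _
    have h2 : x * 60 ^ N = κ ^ N := by
      rw [hx, div_pow]; field_simp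
    have h3 : κ ^ N = κ ^ j * κ ^ (N - j) := by rw [← pow_add]; congr 1; omega
    have h4 : C * x * 60 ^ N ≤ κ ^ j * 60 ^ N := by
      calc C * x * 60 ^ N = C * (κ ^ j * κ ^ (N - j)) := by rw [mul_assoc, h2, h3]
        _ ≤ C * (κ ^ j * 5 ^ (N - j)) := by
            have h5 : κ ^ (N - j) * κ ^ j ≤ 5 ^ (N - j) * κ ^ j :=
              mul_le_mul_of_nonneg_right h1 (by positivity)
            have h6 := mul_le_mul_of_nonneg_left h5 hC
            linarith only [h6]
        _ = (C * 5 ^ (N - j)) * κ ^ j := by ring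
        _ ≤ 60 ^ N * κ ^ j := mul_le_mul_of_nonneg_right hC5 (by positivity)
        _ = κ ^ j * 60 ^ N := by ring
    exact le_of_mul_le_mul_right h4 h60
  have h10 : 10 * lam ≤ κ ^ 1 := by
    refine cond 10 lam 40 1 (by norm_num) hlam_eq (by norm_num) (by norm_num)
  rw [pow_one] at h10
  have h25 : 25 * lam ≤ κ ^ 2 :=
    cond 25 lam 40 2 (by norm_num) hlam_eq (by norm_num) (by norm_num)
  have h250 : 250 * lam ≤ κ ^ 3 :=
    cond 250 lam 40 3 (by norm_num) hlam_eq (by norm_num) (by norm_num)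
  have h5000 : 5000 * lam ≤ κ ^ 4 :=
    cond 5000 lam 40 4 (by norm_num) hlam_eq (by norm_num) (by norm_num)
  have h75' : 75 * μ ^ 3 ≤ κ ^ 2 :=
    cond 75 (μ ^ 3) 30 2 (by norm_num) (by rw [hμdef, ← pow_mul]) (by norm_num) (by norm_num)
  have h75 : 75 * lam ≤ μ * κ ^ 2 := by
    have := mul_le_mul_of_nonneg_left h75' hμ0.le
    calc 75 * lam = μ * (75 * μ ^ 3) := by rw [hlamdef]; ring
      _ ≤ μ * κ ^ 2 := this
  have hlam1 : lam < 1 := by linarith only [h10, hκ5, hlam0]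
  have hlamκ : lam < κ := by linarith only [h10, hlam0]
  have hμ1 : μ ≤ 1 := by
    rw [hμdef]
    exact pow_le_one₀ (by positivity) (by linarith)
  refine ⟨lam, hlam0, hlamκ, ?_⟩
  intro b hb0 hblam
  refine ⟨lam, hblam, lt_min hlam1 hlamκ, ?_⟩
  intro n hn v hv A A' hAs hyp
  set w : ℕ → E2 := fun i => matProd A i v with hw
  set w' : ℕ → E2 := fun i => matProd A' i v with hw'
  have hw0 : w 0 = v := rfl
  have hw'0 : w' 0 = v := rfl
  have hwsucc : ∀ i, w (i + 1) = A (i + 1) (w i) := fun i => rfl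
  have hw'succ : ∀ i, w' (i + 1) = A' (i + 1) (w' i) := fun i => rfl
  -- upper bounds on norms
  have hwle : ∀ i, i ≤ n → ‖w i‖ ≤ 5 ^ i := by
    intro i
    induction i with
    | zero => intro _; rw [hw0, hv]; norm_num
    | succ i IH =>
      intro hin
      have h5 : ‖A (i + 1)‖ ≤ 5 := (hAs (i + 1) (Nat.le_add_left 1 i) hin).2.2.1
      calc ‖w (i + 1)‖ = ‖A (i + 1) (w i)‖ := by rw [hwsucc]
        _ ≤ ‖A (i + 1)‖ * ‖w i‖ := ContinuousLinearMap.le_opNorm _ _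
        _ ≤ 5 * 5 ^ i := by
            exact mul_le_mul h5 (IH (le_trans (Nat.le_succ i) hin)) (norm_nonneg _) (by norm_num)
        _ = 5 ^ (i + 1) := by rw [pow_succ]; ring
  have hw'le : ∀ i, i ≤ n → ‖w' i‖ ≤ 5 ^ i := by
    intro i
    induction i with
    | zero => intro _; rw [hw'0, hv]; norm_num
    | succ i IH =>
      intro hin
      have h5 : ‖A' (i + 1)‖ ≤ 5 := (hAs (i + 1) (Nat.le_add_left 1 i) hin).2.2.2
      calc ‖w' (i + 1)‖ = ‖A' (i + 1) (w' i)‖ := by rw [hw'succ]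
        _ ≤ ‖A' (i + 1)‖ * ‖w' i‖ := ContinuousLinearMap.le_opNorm _ _
        _ ≤ 5 * 5 ^ i := by
            exact mul_le_mul h5 (IH (le_trans (Nat.le_succ i) hin)) (norm_nonneg _) (by norm_num)
        _ = 5 ^ (i + 1) := by rw [pow_succ]; ring
  have hwge : ∀ i, i ≤ n → κ ^ i ≤ ‖w i‖ := by
    intro i hin
    cases i with
    | zero => rw [hw0, hv]; norm_num
    | succ i => exact (hyp (i + 1) (Nat.le_add_left 1 i) hin).1

  -- the main inductive invariant
  have key : ∀ i, i ≤ n →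
      ((1/2 + (1/2) ^ (i+1)) * ‖w i‖ ≤ ‖w' i‖ ∧
       |omega2 (w i) (w' i)| ≤ ((25 * lam) ^ i - b ^ i) / 4 ∧
       0 ≤ (inner ℝ (w i) (w' i) : ℝ)) := by
    intro i
    induction i with
    | zero =>
      intro _
      refine ⟨?_, ?_, ?_⟩
      · rw [hw0, hw'0, hv]; norm_num
      · have h0 : omega2 (w 0) (w' 0) = 0 := by rw [hw0, hw'0, omega2]; ring
        rw [h0]; norm_num
      · rw [hw0, hw'0]; exact real_inner_self_nonneg
    | succ i IH =>
      intro hin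
      have hi : i ≤ n := le_trans (Nat.le_succ i) hin
      obtain ⟨hcN', hΩ, hinner⟩ := IH hi
      -- notation
      set u : E2 := w i
      set u' : E2 := w' i
      have hN : κ ^ i ≤ ‖u‖ := hwge i hi
      have hNle : ‖u‖ ≤ 5 ^ i := hwle i hi
      have hN'le : ‖u'‖ ≤ 5 ^ i := hw'le i hi
      have hW : κ ^ (i+1) ≤ ‖w (i+1)‖ := hwge (i+1) hin
      have hWle : ‖w (i+1)‖ ≤ 5 ^ (i+1) := hwle (i+1) hin
      have hW'le : ‖w' (i+1)‖ ≤ 5 ^ (i+1) := hw'le (i+1) hin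
      obtain ⟨hdet, hdet', hA5, hA'5⟩ := hAs (i+1) (Nat.le_add_left 1 i) hin
      have hE : ‖A (i+1) - A' (i+1)‖ < lam ^ (i+1) := (hyp (i+1) (Nat.le_add_left 1 i) hin).2
      have hK0 : (0:ℝ) < κ ^ i := by positivity
      have hN0 : (0:ℝ) < ‖u‖ := lt_of_lt_of_le hK0 hN
      have hN'0 : (0:ℝ) < ‖u'‖ := lt_of_lt_of_le (mul_pos (by positivity) hN0) hcN'
      obtain ⟨c, p, hdec, hcu, hpu⟩ := decomp u u' (ne_of_gt hN0)
      set Ω : ℝ := ((25 * lam) ^ i - b ^ i) / 4 with hΩdef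
      have hblam : b ≤ lam := le_of_lt hblam
      have hΩ0 : 0 ≤ Ω := by
        rw [hΩdef]
        have : b ^ i ≤ (25 * lam) ^ i := by
          apply pow_le_pow_left₀ hb0.le; linarith only [hblam, hlam0]
        linarith
      have hΩle : Ω ≤ (25 * lam) ^ i / 4 := by
        rw [hΩdef]
        have : (0:ℝ) ≤ b ^ i := by positivity
        linarith
      have hc0 : 0 ≤ c := by
        rw [← hcu] at hinner
        nlinarith only [hinner, mul_pos hN0 hN0]
      -- Ω is at most ‖u‖ * ‖u'‖
      have h4half : (1/2) * κ ^ i ≤ ‖u'‖ := by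
        have t : (0:ℝ) ≤ (1/2)^(i+1) * ‖u‖ :=
          mul_nonneg (by positivity) (norm_nonneg _)
        linarith only [hcN', hN, t]
      have hΩNN : Ω ≤ ‖u‖ * ‖u'‖ := by
        have h1 : (25 * lam) ^ i ≤ (κ ^ i) ^ 2 := by
          calc (25 * lam) ^ i ≤ (κ ^ 2) ^ i :=
                pow_le_pow_left₀ (by positivity) h25 i
            _ = (κ ^ i) ^ 2 := by rw [← pow_mul, ← pow_mul, Nat.mul_comm]
        have t : κ ^ i * ((1/2) * κ ^ i) ≤ ‖u‖ * ‖u'‖ :=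
          mul_le_mul hN h4half (by positivity) (norm_nonneg _)
        linarith only [hΩle, h1, t, sq_nonneg (κ ^ i)]
      -- the inner product is close to ‖u‖ * ‖u'‖
      have hcns : ‖u‖ * ‖u'‖ - Ω ≤ c * ‖u‖ ^ 2 := by
        rw [hcu]
        have hl := lagrange u u'
        have habs : omega2 u u' ^ 2 ≤ Ω ^ 2 := by
          rw [← sq_abs]
          exact pow_le_pow_left₀ (abs_nonneg _) hΩ 2
        nlinarith only [hl, habs, hinner, hΩ0, hΩNN,
          mul_nonneg hΩ0 (sub_nonneg.mpr hΩNN)]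
            -- numeric core inequality
      have hnum : 10 * Ω * 5 ^ i + lam ^ (i+1) * 125 ^ i
          ≤ (1/2) ^ (i+2) * (κ ^ (i+1) * (κ ^ i) ^ 2) := by
        rcases Nat.eq_zero_or_pos i with h0 | hpos
        · subst h0
          simp only [pow_zero, pow_one] at *
          rw [hΩdef]
          norm_num
          linarith only [h10, hlam0]
        · obtain ⟨j, rfl⟩ := Nat.exists_eq_succ_of_ne_zero (Nat.pos_iff_ne_zero.mp hpos)
          have hj : (250 * lam) ^ j ≤ (κ ^ 3) ^ j :=
            pow_le_pow_left₀ (by positivity) (by linarith) j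
          have hM : 16 * (250 * lam) ^ (j+1) ≤ κ ^ (j+2) * (κ ^ (j+1)) ^ 2 := by
            have e1 : κ ^ (j+2) * (κ ^ (j+1)) ^ 2 = κ ^ 4 * (κ ^ 3) ^ j := by
              rw [← pow_mul, ← pow_mul, ← pow_add, ← pow_add]; congr 1; ring
            have e2 : (250 * lam) ^ (j+1) = (250 * lam) * (250 * lam) ^ j := by
              rw [pow_succ]; ring
            rw [e1, e2]
            have h4 : 16 * (250 * lam) ≤ κ ^ 4 := by linarith
            have hk3 : (0:ℝ) ≤ (250*lam) ^ j := by positivity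
            have t := mul_le_mul h4 hj hk3 (by positivity : (0:ℝ) ≤ κ ^ 4)
            linarith only [t]
          -- expand powers of 2
          have e3 : ((1:ℝ)/2) ^ (j+1+2) * (2:ℝ) ^ (j+1+2) = 1 := by
            rw [← mul_pow]; norm_num
          have h2pos : (0:ℝ) < (2:ℝ) ^ (j+1+2) := by positivity
          rw [← mul_le_mul_iff_of_pos_right h2pos]
          have e4 : (1/2) ^ (j+1+2) * (κ ^ (j+1+1) * (κ ^ (j+1)) ^ 2) * 2 ^ (j+1+2)
              = κ ^ (j+2) * (κ ^ (j+1)) ^ 2 := by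
            rw [show (1/2:ℝ) ^ (j+1+2) * (κ ^ (j+1+1) * (κ ^ (j+1)) ^ 2) * 2 ^ (j+1+2)
              = ((1/2) ^ (j+1+2) * 2 ^ (j+1+2)) * (κ ^ (j+1+1) * (κ ^ (j+1)) ^ 2) by ring, e3]
            ring
          rw [e4]
          have e5 : (10 * Ω * 5 ^ (j+1) + lam ^ (j+1+1) * 125 ^ (j+1)) * 2 ^ (j+1+2)
              ≤ 14 * (250 * lam) ^ (j+1) := by
            have hΩle' : Ω ≤ (25 * lam) ^ (j+1) / 4 := hΩle
            have e6 : (25 * lam) ^ (j+1) * 5 ^ (j+1) * 2 ^ (j+1) = (250 * lam) ^ (j+1) := by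
              rw [← mul_pow, ← mul_pow]; congr 1; ring
            have e7 : lam ^ (j+1+1) * 125 ^ (j+1) * 2 ^ (j+1) = lam * (250 * lam) ^ (j+1) := by
              have e7' : (250 * lam) ^ (j+1) = lam ^ (j+1) * 125 ^ (j+1) * 2 ^ (j+1) := by
                rw [← mul_pow, ← mul_pow]; congr 1; ring
              rw [e7', pow_succ]; ring
            have e8 : (2:ℝ) ^ (j+1+2) = 4 * 2 ^ (j+1) := by rw [pow_add]; ring
            have h5p : (0:ℝ) < 5 ^ (j+1) := by positivity
            have h2p : (0:ℝ) < 2 ^ (j+1) := by positivity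
            have hlam1' : lam ≤ 1 := hlam1.le
            have h25p : (0:ℝ) ≤ (25 * lam) ^ (j+1) := by positivity
            have h250p : (0:ℝ) ≤ (250 * lam) ^ (j+1) := by positivity
            calc (10 * Ω * 5 ^ (j+1) + lam ^ (j+1+1) * 125 ^ (j+1)) * 2 ^ (j+1+2)
                = 10 * Ω * 5 ^ (j+1) * (4 * 2 ^ (j+1))
                  + 4 * (lam ^ (j+1+1) * 125 ^ (j+1) * 2 ^ (j+1)) := by rw [e8]; ring
              _ ≤ 10 * ((25 * lam) ^ (j+1) / 4) * 5 ^ (j+1) * (4 * 2 ^ (j+1))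
                  + 4 * (lam * (250 * lam) ^ (j+1)) := by
                  rw [← e7]
                  have : 10 * Ω * 5 ^ (j+1) * (4 * 2 ^ (j+1))
                      ≤ 10 * ((25 * lam) ^ (j+1) / 4) * 5 ^ (j+1) * (4 * 2 ^ (j+1)) := by
                    have t := mul_le_mul_of_nonneg_right hΩle'
                      (le_of_lt (by positivity : (0:ℝ) < 5 ^ (j+1) * (4 * 2 ^ (j+1))))
                    linarith only [t]
                  linarith only [this]
              _ = 10 * ((25 * lam) ^ (j+1) * 5 ^ (j+1) * 2 ^ (j+1)) + 4 * lam * (250 * lam) ^ (j+1) := by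
                  ring
              _ = 10 * (250 * lam) ^ (j+1) + 4 * lam * (250 * lam) ^ (j+1) := by rw [e6]
              _ ≤ 14 * (250 * lam) ^ (j+1) := by
                  have t : (0:ℝ) ≤ (1 - lam) * (250 * lam) ^ (j+1) :=
                    mul_nonneg (by linarith only [hlam1']) h250p
                  linarith only [t]
          calc (10 * Ω * 5 ^ (j+1) + lam ^ (j+1+1) * 125 ^ (j+1)) * 2 ^ (j+1+2)
              ≤ 14 * (250 * lam) ^ (j+1) := e5
            _ ≤ 16 * (250 * lam) ^ (j+1) := by
                have t : (0:ℝ) ≤ (250 * lam) ^ (j+1) := by positivity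
                linarith only [t]
            _ ≤ κ ^ (j+2) * (κ ^ (j+1)) ^ 2 := hM
            -- atom notation
      have hueq : w (i+1) = A (i+1) u := hwsucc i
      have hu'eq : w' (i+1) = A' (i+1) u' := hw'succ i
      have hW0 : (0:ℝ) < ‖w (i+1)‖ := lt_of_lt_of_le (by positivity) hW
      have hApnorm : ‖A (i+1) p‖ ≤ 5 * ‖p‖ := by
        calc ‖A (i+1) p‖ ≤ ‖A (i+1)‖ * ‖p‖ := ContinuousLinearMap.le_opNorm _ _
          _ ≤ 5 * ‖p‖ := mul_le_mul_of_nonneg_right hA5 (norm_nonneg _)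
      have hEu' : ‖(A' (i+1) - A (i+1)) u'‖ ≤ lam ^ (i+1) * ‖u'‖ := by
        calc ‖(A' (i+1) - A (i+1)) u'‖ ≤ ‖A' (i+1) - A (i+1)‖ * ‖u'‖ :=
              ContinuousLinearMap.le_opNorm _ _
          _ ≤ lam ^ (i+1) * ‖u'‖ := by
              apply mul_le_mul_of_nonneg_right _ (norm_nonneg _)
              rw [norm_sub_rev]; exact hE.le
      have hAu'dec : A (i+1) u' = c • (A (i+1) u) + A (i+1) p := by
        rw [hdec]; simp [map_add, map_smul]
      have hAu'lb : c * ‖w (i+1)‖ - 5 * ‖p‖ ≤ ‖A (i+1) u'‖ := by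
        have h1 : ‖c • (A (i+1) u)‖ ≤ ‖A (i+1) u'‖ + ‖A (i+1) p‖ := by
          have : c • (A (i+1) u) = A (i+1) u' - A (i+1) p := by rw [hAu'dec]; abel
          rw [this]; exact norm_sub_le _ _
        have h2 : ‖c • (A (i+1) u)‖ = c * ‖w (i+1)‖ := by
          rw [norm_smul, Real.norm_eq_abs, abs_of_nonneg hc0, hueq]
        rw [h2] at h1
        linarith only [h1, hApnorm]
      have hw'dec : w' (i+1) = A (i+1) u' + (A' (i+1) - A (i+1)) u' := by
        rw [hu'eq]; simp [ContinuousLinearMap.sub_apply]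
      have hW'lb : ‖A (i+1) u'‖ - lam ^ (i+1) * ‖u'‖ ≤ ‖w' (i+1)‖ := by
        have h1 : ‖A (i+1) u'‖ ≤ ‖w' (i+1)‖ + ‖(A' (i+1) - A (i+1)) u'‖ := by
          have : A (i+1) u' = w' (i+1) - (A' (i+1) - A (i+1)) u' := by rw [hw'dec]; abel
          rw [this]; exact norm_sub_le _ _
        linarith only [h1, hEu']
      have hpu' : ‖p‖ * ‖u‖ ≤ Ω := by rw [hpu]; exact hΩ
      -- the bracket inequality
      have hbracket : (1/2 + (1/2) ^ (i+2)) * ‖w (i+1)‖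
          ≤ c * ‖w (i+1)‖ - 5 * ‖p‖ - lam ^ (i+1) * ‖u'‖ := by
        have hN2 : (0:ℝ) < ‖u‖ ^ 2 := by positivity
        have hWle5 : ‖w (i+1)‖ ≤ 5 * 5 ^ i := by
          rw [pow_succ] at hWle; linarith only [hWle]
        have t1 : (‖u‖ * ‖u'‖ - Ω) * ‖w (i+1)‖ ≤ (c * ‖u‖ ^ 2) * ‖w (i+1)‖ :=
          mul_le_mul_of_nonneg_right hcns hW0.le
        have t2 : (‖p‖ * ‖u‖) * ‖u‖ ≤ Ω * ‖u‖ :=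
          mul_le_mul_of_nonneg_right hpu' (norm_nonneg _)
        have t3 : ((1/2 + (1/2) ^ (i+1)) * ‖u‖) * (‖u‖ * ‖w (i+1)‖)
            ≤ ‖u'‖ * (‖u‖ * ‖w (i+1)‖) :=
          mul_le_mul_of_nonneg_right hcN' (mul_nonneg (norm_nonneg _) hW0.le)
        have t4 : Ω * ‖w (i+1)‖ ≤ Ω * (5 * 5 ^ i) := mul_le_mul_of_nonneg_left hWle5 hΩ0
        have t5 : Ω * ‖u‖ ≤ Ω * 5 ^ i := mul_le_mul_of_nonneg_left hNle hΩ0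
        have h125 : (5:ℝ) ^ i * (5 ^ i) ^ 2 = 125 ^ i := by
          rw [← pow_mul, ← pow_add, show (125:ℝ) = 5 ^ 3 by norm_num, ← pow_mul]
          congr 1; ring
        have hx : ‖u'‖ * ‖u‖ ^ 2 ≤ 125 ^ i := by
          rw [← h125]
          exact mul_le_mul hN'le (pow_le_pow_left₀ (norm_nonneg _) hNle 2)
            (by positivity) (by positivity)
        have t6 : lam ^ (i+1) * (‖u'‖ * ‖u‖ ^ 2) ≤ lam ^ (i+1) * 125 ^ i :=
          mul_le_mul_of_nonneg_left hx (by positivity)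
        have t7 : (1/2) ^ (i+2) * (κ ^ (i+1) * (κ ^ i) ^ 2)
            ≤ (1/2) ^ (i+2) * (‖w (i+1)‖ * ‖u‖ ^ 2) := by
          apply mul_le_mul_of_nonneg_left _ (by positivity : (0:ℝ) ≤ (1/2) ^ (i+2))
          exact mul_le_mul hW (pow_le_pow_left₀ (by positivity) hN 2) (by positivity) hW0.le
        have hhalf : ((1:ℝ)/2) ^ (i+1) = 2 * (1/2) ^ (i+2) := by rw [pow_succ]; ring
        rw [hhalf] at t3
        have hmul : ((1/2 + (1/2) ^ (i+2)) * ‖w (i+1)‖) * ‖u‖ ^ 2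
            ≤ (c * ‖w (i+1)‖ - 5 * ‖p‖ - lam ^ (i+1) * ‖u'‖) * ‖u‖ ^ 2 := by
          linarith only [t1, t2, t3, t4, t5, t6, t7, hnum]
        exact le_of_mul_le_mul_right hmul hN2
      refine ⟨?_, ?_, ?_⟩
      · -- norm lower bound
        linarith only [hbracket, hAu'lb, hW'lb]
      · -- area form bound
        have homsplit : omega2 (w (i+1)) (w' (i+1))
            = b * omega2 u u' + omega2 (w (i+1)) ((A' (i+1) - A (i+1)) u') := by
          rw [hw'dec, hueq, omega2_add_right, omega2_map, hdet]
        have habs2 : |omega2 (w (i+1)) (w' (i+1))|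
            ≤ b * Ω + ‖w (i+1)‖ * (lam ^ (i+1) * ‖u'‖) := by
          rw [homsplit]
          have h1 : |b * omega2 u u'| ≤ b * Ω := by
            rw [abs_mul, abs_of_nonneg hb0.le]
            exact mul_le_mul_of_nonneg_left hΩ hb0.le
          have h2 : |omega2 (w (i+1)) ((A' (i+1) - A (i+1)) u')|
              ≤ ‖w (i+1)‖ * (lam ^ (i+1) * ‖u'‖) := by
            calc |omega2 (w (i+1)) ((A' (i+1) - A (i+1)) u')|
                ≤ ‖w (i+1)‖ * ‖(A' (i+1) - A (i+1)) u'‖ := abs_omega2_le _ _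
              _ ≤ ‖w (i+1)‖ * (lam ^ (i+1) * ‖u'‖) :=
                  mul_le_mul_of_nonneg_left hEu' hW0.le
          calc |b * omega2 u u' + omega2 (w (i+1)) ((A' (i+1) - A (i+1)) u')|
              ≤ |b * omega2 u u'| + |omega2 (w (i+1)) ((A' (i+1) - A (i+1)) u')| := abs_add_le _ _
            _ ≤ b * Ω + ‖w (i+1)‖ * (lam ^ (i+1) * ‖u'‖) := by linarith only [h1, h2]
        have h25i : (5:ℝ) ^ i * 5 ^ i = 25 ^ i := by rw [← mul_pow]; norm_num
        have hWN' : ‖w (i+1)‖ * (lam ^ (i+1) * ‖u'‖) ≤ 5 * lam ^ (i+1) * 25 ^ i := by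
          have hWle5 : ‖w (i+1)‖ ≤ 5 * 5 ^ i := by
            rw [pow_succ] at hWle; linarith only [hWle]
          have := mul_le_mul hWle5 (mul_le_mul_of_nonneg_left hN'le (by positivity : (0:ℝ) ≤ lam ^ (i+1)))
            (by positivity) (by positivity)
          calc ‖w (i+1)‖ * (lam ^ (i+1) * ‖u'‖) ≤ (5 * 5 ^ i) * (lam ^ (i+1) * 5 ^ i) := this
            _ = 5 * lam ^ (i+1) * (5 ^ i * 5 ^ i) := by ring
            _ = 5 * lam ^ (i+1) * 25 ^ i := by rw [h25i]
        have hX0 : (0:ℝ) ≤ (25 * lam) ^ i := by positivity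
        have hl1 : lam ^ (i+1) * 25 ^ i = lam * (25 * lam) ^ i := by
          have h' : (25 * lam) ^ i = 25 ^ i * lam ^ i := mul_pow _ _ _
          rw [h', pow_succ]; ring
        have hl2 : (25 * lam) ^ (i+1) = 25 * lam * (25 * lam) ^ i := by rw [pow_succ]; ring
        have hl3 : b ^ (i+1) = b * b ^ i := by rw [pow_succ]; ring
        have hfin : b * Ω + 5 * lam ^ (i+1) * 25 ^ i ≤ ((25 * lam) ^ (i+1) - b ^ (i+1)) / 4 := by
          rw [hΩdef, hl2, hl3]
          have t8 : 0 ≤ (lam - b) * (25 * lam) ^ i :=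
            mul_nonneg (by linarith only [hblam]) hX0
          have t9 : 0 ≤ lam * (25 * lam) ^ i := mul_nonneg hlam0.le hX0
          linarith only [t8, t9, hl1]
        calc |omega2 (w (i+1)) (w' (i+1))| ≤ b * Ω + ‖w (i+1)‖ * (lam ^ (i+1) * ‖u'‖) := habs2
          _ ≤ b * Ω + 5 * lam ^ (i+1) * 25 ^ i := by linarith only [hWN']
          _ ≤ ((25 * lam) ^ (i+1) - b ^ (i+1)) / 4 := hfin
      · -- inner product nonneg
        have hsplit : (inner ℝ (w (i+1)) (w' (i+1)) : ℝ)
            = c * ‖w (i+1)‖ ^ 2 + (inner ℝ (A (i+1) u) (A (i+1) p) : ℝ)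
              + (inner ℝ (A (i+1) u) ((A' (i+1) - A (i+1)) u') : ℝ) := by
          rw [hw'dec, hAu'dec, hueq]
          rw [inner_add_right, inner_add_right, real_inner_smul_right,
            real_inner_self_eq_norm_sq]
        have i1 : |(inner ℝ (A (i+1) u) (A (i+1) p) : ℝ)| ≤ ‖w (i+1)‖ * (5 * ‖p‖) := by
          calc |(inner ℝ (A (i+1) u) (A (i+1) p) : ℝ)| ≤ ‖A (i+1) u‖ * ‖A (i+1) p‖ :=
                abs_real_inner_le_norm _ _
            _ ≤ ‖w (i+1)‖ * (5 * ‖p‖) := by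
                rw [← hueq]
                exact mul_le_mul_of_nonneg_left hApnorm hW0.le
        have i2 : |(inner ℝ (A (i+1) u) ((A' (i+1) - A (i+1)) u') : ℝ)|
            ≤ ‖w (i+1)‖ * (lam ^ (i+1) * ‖u'‖) := by
          calc |(inner ℝ (A (i+1) u) ((A' (i+1) - A (i+1)) u') : ℝ)|
              ≤ ‖A (i+1) u‖ * ‖(A' (i+1) - A (i+1)) u'‖ := abs_real_inner_le_norm _ _
            _ ≤ ‖w (i+1)‖ * (lam ^ (i+1) * ‖u'‖) := by
                rw [← hueq]
                exact mul_le_mul_of_nonneg_left hEu' hW0.le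
        have tb := mul_le_mul_of_nonneg_right hbracket hW0.le
        have tpos : (0:ℝ) ≤ ((1/2 + (1/2) ^ (i+2)) * ‖w (i+1)‖) * ‖w (i+1)‖ :=
          mul_nonneg (mul_nonneg (by positivity) hW0.le) hW0.le
        rw [hsplit]
        have n1 := neg_abs_le ((inner ℝ (A (i+1) u) (A (i+1) p) : ℝ))
        have n2 := neg_abs_le ((inner ℝ (A (i+1) u) ((A' (i+1) - A (i+1)) u') : ℝ))
        nlinarith only [tb, tpos, i1, i2, n1, n2]
  -- conclusion
  intro i hi1 hin
  obtain ⟨ha, hb', hc'⟩ := key i hin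
  have hKpos : (0:ℝ) < κ ^ i := by positivity
  have hwpos : (0:ℝ) < ‖w i‖ := lt_of_lt_of_le hKpos (hwge i hin)
  have hw'pos : (0:ℝ) < ‖w' i‖ := lt_of_lt_of_le (mul_pos (by positivity) hwpos) ha
  refine ⟨norm_pos_iff.mp hwpos, norm_pos_iff.mp hw'pos, ?_⟩
  -- angle bound
  have hμi1 : μ ^ i ≤ 1 := pow_le_one₀ hμ0.le hμ1
  have hμi0 : (0:ℝ) < μ ^ i := by positivity
  have hM0 : (0:ℝ) < ‖w i‖ * ‖w' i‖ := mul_pos hwpos hw'pos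
  -- |omega| ≤ (μ^i/3) * (‖w i‖ * ‖w' i‖)
  have hs : |omega2 (w i) (w' i)| ≤ (μ ^ i / 3) * (‖w i‖ * ‖w' i‖) := by
    have h1 : (25 * lam) ^ i ≤ (μ * κ ^ 2 / 3) ^ i :=
      pow_le_pow_left₀ (by positivity) (by linarith only [h75]) i
    have h2 : (μ * κ ^ 2 / 3) ^ i = μ ^ i * (κ ^ i) ^ 2 * (1/3) ^ i := by
      rw [div_pow, mul_pow, ← pow_mul κ 2 i, Nat.mul_comm 2 i, pow_mul κ i 2, one_div, inv_pow]
      ring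
    have h3 : ((1:ℝ)/3) ^ i ≤ 1/3 := by
      calc ((1:ℝ)/3) ^ i ≤ (1/3) ^ 1 := pow_le_pow_of_le_one (by norm_num) (by norm_num) hi1
        _ = 1/3 := pow_one _
    have h4 : (25 * lam) ^ i ≤ μ ^ i * (κ ^ i) ^ 2 / 3 := by
      rw [h2] at h1
      have h5 : μ ^ i * (κ ^ i) ^ 2 * (1/3) ^ i ≤ μ ^ i * (κ ^ i) ^ 2 * (1/3) :=
        mul_le_mul_of_nonneg_left h3 (by positivity)
      calc (25 * lam) ^ i ≤ μ ^ i * (κ ^ i) ^ 2 * (1/3) ^ i := h1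
        _ ≤ μ ^ i * (κ ^ i) ^ 2 * (1/3) := h5
        _ = μ ^ i * (κ ^ i) ^ 2 / 3 := by ring
    -- ‖w i‖ * ‖w' i‖ ≥ (κ^i)^2 / 2
    have h6 : (κ ^ i) ^ 2 / 2 ≤ ‖w i‖ * ‖w' i‖ := by
      have t0 : (0:ℝ) ≤ (1/2) ^ (i+1) * ‖w i‖ := mul_nonneg (by positivity) (norm_nonneg _)
      have t1 : (1/2) * κ ^ i ≤ ‖w' i‖ := by linarith only [ha, hwge i hin, t0]
      have t : κ ^ i * ((1/2) * κ ^ i) ≤ ‖w i‖ * ‖w' i‖ :=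
        mul_le_mul (hwge i hin) t1 (by positivity) (norm_nonneg _)
      nlinarith only [t]
    have h7 : |omega2 (w i) (w' i)| ≤ ((25 * lam) ^ i - b ^ i) / 4 := hb'
    have h8 : (0:ℝ) ≤ b ^ i := by positivity
    have t9 : μ ^ i / 3 * ((κ ^ i) ^ 2 / 2) ≤ μ ^ i / 3 * (‖w i‖ * ‖w' i‖) :=
      mul_le_mul_of_nonneg_left h6 (by positivity)
    -- combine: |ω| ≤ (25lam)^i/4 ≤ μ^i (κ^i)^2/12 ≤ (μ^i/3)((κ^i)^2/2)·(1/2)... 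
    have hY : (0:ℝ) ≤ μ ^ i * (κ ^ i) ^ 2 := by positivity
    linarith only [h4, h7, h8, t9, hY]
  -- inner product lower bound
  have hω2 : omega2 (w i) (w' i) ^ 2 ≤ (μ ^ i / 3 * (‖w i‖ * ‖w' i‖)) ^ 2 := by
    rw [← sq_abs]
    exact pow_le_pow_left₀ (abs_nonneg _) hs 2
  have hlag := lagrange (w i) (w' i)
  have hM2 : ‖w i‖ ^ 2 * ‖w' i‖ ^ 2 = (‖w i‖ * ‖w' i‖) ^ 2 := by ring
  have hs3 : (0:ℝ) < 1 - (μ ^ i / 3) ^ 2 := by nlinarith only [hμi1, hμi0]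
  have hDlb : (1 - (μ ^ i / 3) ^ 2) * (‖w i‖ * ‖w' i‖) ≤ (inner ℝ (w i) (w' i) : ℝ) := by
    have hint : (0:ℝ) ≤ (1 - (μ ^ i / 3) ^ 2) * (‖w i‖ * ‖w' i‖) ^ 2 * (μ ^ i / 3) ^ 2 :=
      mul_nonneg (mul_nonneg hs3.le (sq_nonneg _)) (sq_nonneg _)
    have hsq : ((1 - (μ ^ i / 3) ^ 2) * (‖w i‖ * ‖w' i‖)) ^ 2
        ≤ (inner ℝ (w i) (w' i) : ℝ) ^ 2 := by
      nlinarith only [hω2, hlag, hM2, hint]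
    calc (1 - (μ ^ i / 3) ^ 2) * (‖w i‖ * ‖w' i‖)
        = √(((1 - (μ ^ i / 3) ^ 2) * (‖w i‖ * ‖w' i‖)) ^ 2) :=
          (Real.sqrt_sq (mul_nonneg hs3.le hM0.le)).symm
      _ ≤ √((inner ℝ (w i) (w' i) : ℝ) ^ 2) := Real.sqrt_le_sqrt hsq
      _ = |(inner ℝ (w i) (w' i) : ℝ)| := Real.sqrt_sq_eq_abs _
      _ = (inner ℝ (w i) (w' i) : ℝ) := abs_of_nonneg hc'
  -- convert to the angle bound
  have hcosle : Real.cos (μ ^ i) ≤ 1 - (μ ^ i) ^ 2 / 9 := cos_le_aux hμi0.le hμi1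
  have hquot : Real.cos (μ ^ i) ≤ (inner ℝ (w i) (w' i) : ℝ) / (‖w i‖ * ‖w' i‖) := by
    rw [le_div_iff₀ hM0]
    have : (1 - (μ ^ i / 3) ^ 2) = 1 - (μ ^ i) ^ 2 / 9 := by ring
    calc Real.cos (μ ^ i) * (‖w i‖ * ‖w' i‖) ≤ (1 - (μ ^ i) ^ 2 / 9) * (‖w i‖ * ‖w' i‖) :=
          mul_le_mul_of_nonneg_right hcosle hM0.le
      _ = (1 - (μ ^ i / 3) ^ 2) * (‖w i‖ * ‖w' i‖) := by rw [this]
      _ ≤ (inner ℝ (w i) (w' i) : ℝ) := hDlb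
  have hangle : InnerProductGeometry.angle (w i) (w' i) ≤ μ ^ i := by
    have h1 : InnerProductGeometry.angle (w i) (w' i)
        = Real.arccos ((inner ℝ (w i) (w' i) : ℝ) / (‖w i‖ * ‖w' i‖)) := rfl
    rw [h1]
    calc Real.arccos ((inner ℝ (w i) (w' i) : ℝ) / (‖w i‖ * ‖w' i‖))
        ≤ Real.arccos (Real.cos (μ ^ i)) := arccos_anti hquot
      _ = μ ^ i := Real.arccos_cos hμi0.le
          (le_trans hμi1 (by linarith only [Real.pi_gt_three]))
  have hrpow : lam ^ ((i : ℝ) / 4) = μ ^ i := by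
    have h4 : ((4:ℕ):ℝ) * ((i:ℝ)/4) = (i:ℝ) := by push_cast; ring
    rw [hlamdef, ← Real.rpow_natCast μ 4, ← Real.rpow_mul hμ0.le, h4, Real.rpow_natCast]
  rw [hrpow]
  exact hangle
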